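/- arXiv:2211.08944 — 3 statements merged into one kernel-verified Lean document; each statement's English description precedes it below -/
import Mathlib

section
/- Let X and Y be random variables where Y = D(X) for a measurable function D. Let X̂ be an estimator such that X̂ is conditionally independent of X given Y. If X̂ is perfectly consistent (the conditional distribution of Y given X̂ equals the conditional distribution of Y given X, i.e., D(X̂) = Y almost surely) and achieves perfect perceptual quality (the law of X̂ equals the law of X), then the conditional distribution of X̂ given Y equals the conditional distribution of X given Y (the posterior). -/
open MeasureTheory ProbabilityTheory

/-- **Posterior uniqueness (forward direction).** If an estimator `Xhat`, conditionally
independent of `X` given `Y = D ∘ X`, is perfectly consistent (`D ∘ Xhat = Y` a.s.) and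
achieves perfect perceptual quality (`Law(Xhat) = Law(X)`), then its conditional
distribution given `Y` agrees with the posterior `p_{X|Y}` almost everywhere. -/
theorem posterior_uniqueness_forward
    {n m : ℕ} {Ω : Type*} [MeasurableSpace Ω] [StandardBorelSpace Ω]
    (μ : Measure Ω) [IsProbabilityMeasure μ]
    (X Xhat : Ω → EuclideanSpace ℝ (Fin n))
    (D : EuclideanSpace ℝ (Fin n) → EuclideanSpace ℝ (Fin m))
    (hX : Measurable X) (hXhat : Measurable Xhat) (hD : Measurable D)
    (Y : Ω → EuclideanSpace ℝ (Fin m)) (hY : Y = D ∘ X) (hYm : Measurable Y)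
    -- Markov chain X → Y → Xhat : X and Xhat are conditionally independent given Y
    (hindep : CondIndepFun (MeasurableSpace.comap Y inferInstance) hYm.comap_le X Xhat μ)
    -- perfect consistency: D(Xhat) = Y almost surely
    (hconsistent : (fun ω => D (Xhat ω)) =ᵐ[μ] Y)
    -- perfect perceptual quality: Law(Xhat) = Law(X)
    (hperc : μ.map Xhat = μ.map X) :
    -- conclusion: Xhat is a posterior sampler
    ∀ᵐ y ∂(μ.map Y), condDistrib Xhat Y μ y = condDistrib X Y μ y := by
  -- The two joint laws coincide
  have hjoint : μ.map (fun ω => (Y ω, Xhat ω)) = μ.map (fun ω => (Y ω, X ω)) := by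
    have h1 : μ.map (fun ω => (Y ω, Xhat ω)) = μ.map (fun ω => (D (Xhat ω), Xhat ω)) :=
      Measure.map_congr (hconsistent.mono fun ω h => by simp [h])
    have hDm : Measurable fun x : EuclideanSpace ℝ (Fin n) => (D x, x) :=
      hD.prodMk measurable_id
    have h2 : μ.map (fun ω => (D (Xhat ω), Xhat ω))
        = (μ.map Xhat).map (fun x => (D x, x)) :=
      (Measure.map_map hDm hXhat).symm
    have h3 : (μ.map X).map (fun x => (D x, x))
        = μ.map (fun ω => (Y ω, X ω)) := by
      rw [Measure.map_map hDm hX, hY]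
      rfl
    rw [h1, h2, hperc, h3]
  -- the posterior kernel disintegrates the joint law of (Y, X)
  have hdis : μ.map (fun ω => (Y ω, X ω)) = μ.map Y ⊗ₘ condDistrib X Y μ := by
    have hfst : (μ.map fun ω => (Y ω, X ω)).fst = μ.map Y := Measure.fst_map_prodMk hX
    rw [condDistrib, ← hfst, Measure.disintegrate]
  have := condDistrib_ae_eq_of_measure_eq_compProd (μ := μ) Y hXhat.aemeasurable
    (κ := condDistrib X Y μ) (by rw [hjoint, hdis])
  filter_upwards [this] with y hy using hy
end

section
/- If D is non-invertible in the sense that the posterior p_{X|Y}(·|y) is not a Dirac measure for a set of y's of positive probability, then no deterministic estimator X̂ = G(Y) that is perfectly consistent can achieve perfect perceptual quality Law(X̂) = Law(X). -/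
open MeasureTheory ProbabilityTheory

lemma compProd_deterministic' {α β : Type*} [MeasurableSpace α] [MeasurableSpace β]
    (μ : Measure α) [SFinite μ] {g : α → β} (hg : Measurable g) :
    μ ⊗ₘ Kernel.deterministic g hg = μ.map (fun a => (a, g a)) := by
  have hm : Measurable fun a => (a, g a) := measurable_id.prodMk hg
  ext s hs
  rw [Measure.compProd_apply hs, Measure.map_apply hm hs]
  simp_rw [Kernel.deterministic_apply, Measure.dirac_apply' _ (measurable_prodMk_left hs)]
  rw [← lintegral_indicator_one (hm hs)]
  rfl

/-- **No consistent deterministic estimator attains perfect perceptual quality** when the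
degradation is non-invertible, in the sense that the posterior `p_{X|Y}(·|y)` is not a
Dirac measure for a set of `y`'s of positive probability. -/
theorem deterministic_consistent_imperfect_perceptual
    {n m : ℕ} {Ω : Type*} [MeasurableSpace Ω] [StandardBorelSpace Ω]
    (μ : Measure Ω) [IsProbabilityMeasure μ]
    (X : Ω → EuclideanSpace ℝ (Fin n))
    (D : EuclideanSpace ℝ (Fin n) → EuclideanSpace ℝ (Fin m))
    (hX : Measurable X) (hD : Measurable D)
    (Y : Ω → EuclideanSpace ℝ (Fin m)) (hY : Y = D ∘ X)
    -- non-invertibility: on a set of y's of positive probability the posterior is non-Dirac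
    (hillposed : 0 < μ.map Y {y | ∀ x, condDistrib X Y μ y ≠ Measure.dirac x})
    -- deterministic estimator
    (G : EuclideanSpace ℝ (Fin m) → EuclideanSpace ℝ (Fin n)) (hG : Measurable G)
    (Xhat : Ω → EuclideanSpace ℝ (Fin n)) (hXhat : Xhat = G ∘ Y)
    -- perfect consistency
    (hconsistent : (fun ω => D (Xhat ω)) =ᵐ[μ] Y) :
    -- conclusion: perfect perceptual quality is impossible
    μ.map Xhat ≠ μ.map X := by
  intro heq
  have hYm : Measurable Y := hY ▸ hD.comp hX
  have hXhatm : Measurable Xhat := hXhat ▸ hG.comp hYm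
  have hDm : Measurable fun x : EuclideanSpace ℝ (Fin n) => (D x, x) :=
    hD.prodMk measurable_id
  -- joint law of (Y, X) equals joint law of (Y, Xhat)
  have hjoint : μ.map (fun ω => (Y ω, X ω)) = μ.map (fun ω => (Y ω, Xhat ω)) := by
    have h1 : μ.map (fun ω => (Y ω, X ω)) = (μ.map X).map (fun x => (D x, x)) := by
      rw [Measure.map_map hDm hX, hY]; rfl
    have h2 : μ.map (fun ω => (Y ω, Xhat ω)) = (μ.map Xhat).map (fun x => (D x, x)) := by
      rw [Measure.map_map hDm hXhatm]
      refine Measure.map_congr ?_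
      filter_upwards [hconsistent] with ω hω
      simp only [Function.comp_apply]
      rw [hω]
    rw [h1, h2, heq]
  -- joint law of (Y, Xhat) is compProd with deterministic kernel
  have hcomp : μ.map (fun ω => (Y ω, X ω)) = μ.map Y ⊗ₘ Kernel.deterministic G hG := by
    have hGm : Measurable fun y : EuclideanSpace ℝ (Fin m) => (y, G y) :=
      measurable_id.prodMk hG
    rw [hjoint, compProd_deterministic' _ hG, Measure.map_map hGm hYm]
    refine Measure.map_congr ?_
    filter_upwards with ω
    simp [hXhat, Function.comp]
  have hae := condDistrib_ae_eq_of_measure_eq_compProd_of_measurable hYm hX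
      (κ := Kernel.deterministic G hG) hcomp
  rw [lt_iff_not_ge] at hillposed
  refine hillposed (le_of_eq ?_)
  refine measure_eq_zero_iff_ae_notMem.mpr ?_
  filter_upwards [hae] with y hy
  simp only [Set.mem_setOf_eq, not_forall, not_not]
  exact ⟨G y, by rw [hy, Kernel.deterministic_apply]⟩
end

section
/- For the sawtooth estimators f_n(y) = ny mod 1 with Y ~ U[0,1], the deterministic sensitivity satisfies: for any ε ∈ (0, 1/(2n)), and any y at distance more than ε from the discontinuity points {k/n}, max_{|δ|≤ε} |f_n(y) − f_n(y+δ)| = nε. Hence the robustness measure R_{f_n,ε} ≥ (1 − 2nε)·n²ε², which grows quadratically in n for fixed small ε — erratic estimators with better perceptual quality are necessarily less robust. -/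
open MeasureTheory Set
open scoped ENNReal

private lemma sawtooth_key (n : ℕ) (hn : 1 ≤ n) {ε : ℝ} (hε : 0 < ε) {y : ℝ}
    (hy : ∀ k : ℤ, ε < |y - k / n|) {δ : ℝ} (hδ : |δ| ≤ ε) :
    |Int.fract ((n : ℝ) * y) - Int.fract ((n : ℝ) * (y + δ))| = n * |δ| := by
  have hn0 : (0:ℝ) < n := by exact_mod_cast hn
  have key : ∀ k : ℤ, ε * n < |(n : ℝ) * y - k| := by
    intro k
    have h := hy k
    have h2 : y - (k : ℝ) / n = ((n : ℝ) * y - k) / n := by field_simp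
    rw [h2, abs_div, abs_of_pos hn0] at h
    exact (lt_div_iff₀ hn0).mp h
  set m := ⌊(n:ℝ) * y⌋ with hm
  have h1 : (m:ℝ) ≤ n * y := Int.floor_le _
  have h2 : (n:ℝ) * y < m + 1 := Int.lt_floor_add_one _
  have hδ1 : -ε ≤ δ := neg_le_of_abs_le hδ
  have hδ2 : δ ≤ ε := le_of_abs_le hδ
  have hA : (m:ℝ) + ε * n < n * y := by
    have h := key m
    rw [abs_of_nonneg (by linarith)] at h
    linarith
  have hB : (n:ℝ) * y + ε * n < m + 1 := by
    have h := key (m + 1)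
    push_cast at h
    rw [abs_of_nonpos (by linarith)] at h
    linarith
  have hfl : ⌊(n:ℝ) * (y + δ)⌋ = m := by
    rw [Int.floor_eq_iff]
    constructor
    · nlinarith [mul_le_mul_of_nonneg_left hδ1 hn0.le]
    · push_cast
      nlinarith [mul_le_mul_of_nonneg_left hδ2 hn0.le]
  simp only [Int.fract, hfl, ← hm]
  have hcalc : ((n:ℝ) * y - m) - ((n:ℝ) * (y + δ) - m) = -((n:ℝ) * δ) := by ring
  rw [hcalc, abs_neg, abs_mul, abs_of_pos hn0]

/-- **Erratic estimators are less robust.** For the sawtooth estimators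
`f_n(y) = ny mod 1` with `Y ~ U[0,1]`: for `ε ∈ (0, 1/(2n))` and any `y` at distance more
than `ε` from every discontinuity point `k/n`, the sensitivity
`max_{|δ|≤ε} |f_n(y) − f_n(y+δ)|` equals `nε`; hence the robustness measure satisfies
`R_{f_n,ε} ≥ (1 − 2nε)·n²ε²`, growing quadratically in `n`. -/
theorem sawtooth_sensitivity_and_robustness (n : ℕ) (hn : 1 ≤ n) (ε : ℝ)
    (hε : 0 < ε) (hε' : ε < 1 / (2 * n)) :
    (∀ y : ℝ, (∀ k : ℤ, ε < |y - k / n|) →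
      (⨆ δ : {δ : ℝ // |δ| ≤ ε},
          |Int.fract (n * y) - Int.fract (n * (y + δ))|) = n * ε) ∧
    ENNReal.ofReal ((1 - 2 * n * ε) * (n ^ 2 * ε ^ 2)) ≤
      ∫⁻ y in Icc (0 : ℝ) 1, ⨆ δ : {δ : ℝ // |δ| ≤ ε},
        ENNReal.ofReal (|Int.fract (n * y) - Int.fract (n * (y + δ))| ^ 2) := by
  have hn0 : (0:ℝ) < n := by exact_mod_cast hn
  have hεabs : |ε| ≤ ε := le_of_eq (abs_of_pos hε)
  constructor
  · intro y hy
    haveI : Nonempty {δ : ℝ // |δ| ≤ ε} := ⟨⟨0, by simpa using hε.le⟩⟩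
    have hb : BddAbove (Set.range fun δ : {δ : ℝ // |δ| ≤ ε} =>
        |Int.fract ((n:ℝ) * y) - Int.fract ((n:ℝ) * (y + δ))|) := by
      refine ⟨n * ε, ?_⟩
      rintro _ ⟨δ, rfl⟩
      dsimp only
      rw [sawtooth_key n hn hε hy δ.2]
      exact mul_le_mul_of_nonneg_left δ.2 hn0.le
    apply le_antisymm
    · refine ciSup_le fun δ => ?_
      rw [sawtooth_key n hn hε hy δ.2]
      exact mul_le_mul_of_nonneg_left δ.2 hn0.le
    · have h := le_ciSup hb (⟨ε, hεabs⟩ : {δ : ℝ // |δ| ≤ ε})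
      rwa [sawtooth_key n hn hε hy hεabs, abs_of_pos hε] at h
  · set S : Set ℝ := ⋃ j ∈ Finset.range n, Ioo ((j:ℝ)/n + ε) (((j:ℝ)+1)/n - ε) with hS
    have hS_meas : MeasurableSet S :=
      (Finset.range n).measurableSet_biUnion fun _ _ => measurableSet_Ioo
    have hgood : ∀ y ∈ S, ∀ k : ℤ, ε < |y - k / n| := by
      intro y hyS k
      simp only [hS, Set.mem_iUnion, Finset.mem_range] at hyS
      obtain ⟨j, hj, hy1, hy2⟩ := hyS
      rcases le_or_gt (k : ℝ) (j : ℝ) with hk | hk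
      · have hkj : (k:ℝ)/n ≤ (j:ℝ)/n := by gcongr
        rw [abs_of_pos (by linarith)]
        linarith
      · have hkj : ((j:ℝ)+1)/n ≤ (k:ℝ)/n := by
          gcongr
          have : (j:ℤ) < k := by exact_mod_cast hk
          have : (j:ℤ) + 1 ≤ k := this
          exact_mod_cast this
        rw [abs_sub_comm, abs_of_pos (by linarith)]
        linarith
    have hS_sub : S ⊆ Icc (0:ℝ) 1 := by
      intro y hyS
      simp only [hS, Set.mem_iUnion, Finset.mem_range] at hyS
      obtain ⟨j, hj, hy1, hy2⟩ := hyS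
      have h0 : (0:ℝ) ≤ (j:ℝ)/n := by positivity
      have h1 : ((j:ℝ)+1)/n ≤ 1 := by
        rw [div_le_one hn0]
        have : (j:ℝ) + 1 ≤ n := by exact_mod_cast hj
        linarith
      constructor <;> [linarith; linarith]
    have hvol : ENNReal.ofReal (1 - 2 * n * ε) ≤ volume S := by
      have hdisj : (↑(Finset.range n) : Set ℕ).PairwiseDisjoint
          fun j => Ioo ((j:ℝ)/n + ε) (((j:ℝ)+1)/n - ε) := by
        intro i _ j _ hij
        rw [Function.onFun, Set.Ioo_disjoint_Ioo]
        rcases lt_or_gt_of_ne hij with h | h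
        · have : ((i:ℝ)+1)/n ≤ (j:ℝ)/n := by
            gcongr; exact_mod_cast h
          calc min (((i:ℝ)+1)/n - ε) (((j:ℝ)+1)/n - ε) ≤ ((i:ℝ)+1)/n - ε :=
                min_le_left _ _
            _ ≤ (j:ℝ)/n + ε := by linarith
            _ ≤ max ((i:ℝ)/n + ε) ((j:ℝ)/n + ε) := le_max_right _ _
        · have : ((j:ℝ)+1)/n ≤ (i:ℝ)/n := by
            gcongr; exact_mod_cast h
          calc min (((i:ℝ)+1)/n - ε) (((j:ℝ)+1)/n - ε) ≤ ((j:ℝ)+1)/n - ε :=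
                min_le_right _ _
            _ ≤ (i:ℝ)/n + ε := by linarith
            _ ≤ max ((i:ℝ)/n + ε) ((j:ℝ)/n + ε) := le_max_left _ _
      have hcount : volume S = ∑ j ∈ Finset.range n,
          volume (Ioo ((j:ℝ)/n + ε) (((j:ℝ)+1)/n - ε)) :=
        measure_biUnion_finset hdisj fun _ _ => measurableSet_Ioo
      have heach : ∀ j ∈ Finset.range n,
          volume (Ioo ((j:ℝ)/n + ε) (((j:ℝ)+1)/n - ε)) =
            ENNReal.ofReal (1/n - 2*ε) := by
        intro j _
        rw [Real.volume_Ioo]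
        congr 1
        field_simp
        ring
      rw [hcount, Finset.sum_congr rfl heach, Finset.sum_const, Finset.card_range,
        nsmul_eq_mul, ← ENNReal.ofReal_natCast n,
        ← ENNReal.ofReal_mul (by positivity)]
      apply le_of_eq
      congr 1
      field_simp
    calc ENNReal.ofReal ((1 - 2 * n * ε) * (n ^ 2 * ε ^ 2))
        = ENNReal.ofReal ((n:ℝ) ^ 2 * ε ^ 2) * ENNReal.ofReal (1 - 2 * n * ε) := by
          rw [← ENNReal.ofReal_mul (by positivity), mul_comm]
      _ ≤ ENNReal.ofReal ((n:ℝ) ^ 2 * ε ^ 2) * volume S := by gcongr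
      _ = ∫⁻ _ in S, ENNReal.ofReal ((n:ℝ) ^ 2 * ε ^ 2) := (setLIntegral_const S _).symm
      _ ≤ ∫⁻ y in S, ⨆ δ : {δ : ℝ // |δ| ≤ ε},
            ENNReal.ofReal (|Int.fract ((n:ℝ) * y) - Int.fract ((n:ℝ) * (y + δ))| ^ 2) := by
          apply lintegral_mono_ae
          filter_upwards [ae_restrict_mem hS_meas] with y hyS
          refine le_trans ?_ (le_iSup _ (⟨ε, hεabs⟩ : {δ : ℝ // |δ| ≤ ε}))
          rw [sawtooth_key n hn hε (hgood y hyS) hεabs, abs_of_pos hε]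
          apply le_of_eq
          congr 1
          ring
      _ ≤ ∫⁻ y in Icc (0:ℝ) 1, ⨆ δ : {δ : ℝ // |δ| ≤ ε},
            ENNReal.ofReal (|Int.fract ((n:ℝ) * y) - Int.fract ((n:ℝ) * (y + δ))| ^ 2) :=
          lintegral_mono_set hS_sub
end
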